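/- If A is skew-involutory and (u, v, σ) is a singular triplet of A, then (-v, u, 1/σ) is also a singular triplet of A. -/

import Mathlib

/-- If `A` is skew-involutory and `(u, v, σ)` is a singular triplet of `A`, then
`(-v, u, 1/σ)` is also a singular triplet of `A`. -/
theorem skewInvolutory_singular_triplet_pair {n : ℕ} (A : Matrix (Fin n) (Fin n) ℂ)
    (hA : A * A = -1) (u v : Fin n → ℂ) (σ : ℝ) (hσ : 0 < σ)
    (hu : dotProduct (star u) u = 1) (hv : dotProduct (star v) v = 1)
    (h1 : A.mulVec v = (σ : ℂ) • u) (h2 : A.conjTranspose.mulVec u = (σ : ℂ) • v) :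
    A.mulVec u = ((σ⁻¹ : ℝ) : ℂ) • (-v) ∧
    A.conjTranspose.mulVec (-v) = ((σ⁻¹ : ℝ) : ℂ) • u := by
  have hσ0 : (σ : ℂ) ≠ 0 := by exact_mod_cast hσ.ne'
  have hAH : A.conjTranspose * A.conjTranspose = -1 := by
    rw [← Matrix.conjTranspose_mul, hA]
    simp
  have key1 : (σ : ℂ) • A.mulVec u = -v := by
    rw [← Matrix.mulVec_smul, ← h1, Matrix.mulVec_mulVec, hA, Matrix.neg_mulVec,
      Matrix.one_mulVec]
  have key2 : (σ : ℂ) • A.conjTranspose.mulVec v = -u := by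
    rw [← Matrix.mulVec_smul, ← h2, Matrix.mulVec_mulVec, hAH, Matrix.neg_mulVec,
      Matrix.one_mulVec]
  constructor
  · have h : A.mulVec u = ((σ : ℂ)⁻¹) • (-v) := by
      rw [← key1, smul_smul, inv_mul_cancel₀ hσ0, one_smul]
    rw [h, Complex.ofReal_inv]
  · rw [Matrix.mulVec_neg]
    have h : A.conjTranspose.mulVec v = ((σ : ℂ)⁻¹) • (-u) := by
      rw [← key2, smul_smul, inv_mul_cancel₀ hσ0, one_smul]
    rw [h, Complex.ofReal_inv, smul_neg, neg_neg]
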